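/- Let σ ∈ (0,1), α > 0, and B, c > 0. On an open interval of m > 0 where B^{1−σ} − (1−m)·c^{1−σ} > 0, define ŵ(m) > 0 by ŵ(m)^{1−σ} = ( B^{1−σ} − (1−m)·c^{1−σ} ) / ∫₀^m e^{α(σ−1)u} du. Then ŵ is differentiable and (1−σ)·ŵ(m)^{−σ}·ŵ′(m) = ( c^{1−σ} − (ŵ(m)·e^{−αm})^{1−σ} ) / ∫₀^m e^{α(σ−1)u} du. In particular ŵ′(m) > 0 if and only if ŵ(m)·e^{−αm} < c, and ŵ′(m) < 0 if and only if ŵ(m)·e^{−αm} > c. -/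

import Mathlib

/-- Key step of Proposition 1(i): the detrended stationary wage ŵ(m) implicitly defined
by the ideal cost-price-index condition is differentiable, its derivative satisfies
(1−σ)ŵ^{−σ}ŵ′ = (c^{1−σ} − (ŵe^{−αm})^{1−σ}) / ∫₀^m e^{α(σ−1)u} du, and ŵ′ > 0 iff
ŵe^{−αm} < c (region 1), ŵ′ < 0 iff ŵe^{−αm} > c. -/
theorem detrended_wage_derivative
    (σ α B c : ℝ) (hσ : σ ∈ Set.Ioo (0:ℝ) 1) (hα : 0 < α) (hB : 0 < B) (hc : 0 < c)
    (lo hi : ℝ) (hlo : 0 ≤ lo) (hlohi : lo < hi)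
    (hpos : ∀ m ∈ Set.Ioo lo hi, 0 < B ^ (1 - σ) - (1 - m) * c ^ (1 - σ))
    (w : ℝ → ℝ)
    (hw : ∀ m ∈ Set.Ioo lo hi, 0 < w m ∧
      w m ^ (1 - σ) = (B ^ (1 - σ) - (1 - m) * c ^ (1 - σ)) /
        (∫ u in (0:ℝ)..m, Real.exp (α * (σ - 1) * u))) :
    ∀ m ∈ Set.Ioo lo hi,
      DifferentiableAt ℝ w m ∧
      (1 - σ) * w m ^ (-σ) * deriv w m =
        (c ^ (1 - σ) - (w m * Real.exp (-α * m)) ^ (1 - σ)) /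
          (∫ u in (0:ℝ)..m, Real.exp (α * (σ - 1) * u)) ∧
      (0 < deriv w m ↔ w m * Real.exp (-α * m) < c) ∧
      (deriv w m < 0 ↔ c < w m * Real.exp (-α * m)) := by
  obtain ⟨hσ0, hσ1⟩ := hσ
  have h1σ : (0:ℝ) < 1 - σ := by linarith
  have h1σ' : (1:ℝ) - σ ≠ 0 := h1σ.ne'
  set k : ℝ := α * (σ - 1) with hk_def
  have hk : k < 0 := mul_neg_of_pos_of_neg hα (by linarith)
  set N : ℝ → ℝ := fun x => B ^ (1 - σ) - (1 - x) * c ^ (1 - σ) with hN_def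
  set I : ℝ → ℝ := fun x => (Real.exp (k * x) - 1) / k with hI_def
  set p : ℝ := (1 - σ)⁻¹ with hp_def
  have hp : 0 < p := inv_pos.mpr h1σ
  -- closed form for the integral
  have Iform : ∀ x : ℝ, (∫ u in (0:ℝ)..x, Real.exp (k * u)) = I x := by
    intro x
    have hder : ∀ u ∈ Set.uIcc (0:ℝ) x,
        HasDerivAt I (Real.exp (k * u)) u := by
      intro u _
      have h1 : HasDerivAt (fun u : ℝ => k * u) k u := by
        simpa using (hasDerivAt_id u).const_mul k
      have h2 := (h1.exp.sub_const 1).div_const k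
      rw [mul_div_assoc, div_self hk.ne, mul_one] at h2
      exact h2
    have hint : IntervalIntegrable (fun u : ℝ => Real.exp (k * u)) MeasureTheory.volume 0 x :=
      (Real.continuous_exp.comp (continuous_const.mul continuous_id)).intervalIntegrable 0 x
    rw [intervalIntegral.integral_eq_sub_of_hasDerivAt hder hint]
    rw [hI_def]
    simp [mul_zero, Real.exp_zero]
  have hIpos : ∀ x : ℝ, 0 < x → 0 < I x := by
    intro x hx
    have h1 : Real.exp (k * x) - 1 < 0 := by
      have : Real.exp (k * x) < 1 := Real.exp_lt_one_iff.mpr (mul_neg_of_neg_of_pos hk hx)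
      linarith
    exact div_pos_of_neg_of_neg h1 hk
  have hIder : ∀ x : ℝ, HasDerivAt I (Real.exp (k * x)) x := by
    intro x
    have h1 : HasDerivAt (fun u : ℝ => k * u) k x := by
      simpa using (hasDerivAt_id x).const_mul k
    have h2 := (h1.exp.sub_const 1).div_const k
    rw [mul_div_assoc, div_self hk.ne, mul_one] at h2
    exact h2
  have hN' : ∀ x : ℝ, HasDerivAt N (c ^ (1 - σ)) x := by
    intro x
    have h1 : HasDerivAt (fun x : ℝ => (1 - x) * c ^ (1 - σ)) (-(c ^ (1 - σ))) x := by
      simpa using ((hasDerivAt_id x).const_sub 1).mul_const (c ^ (1 - σ))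
    simpa using h1.const_sub (B ^ (1 - σ))
  -- w agrees with the explicit formula on the interval
  have heq : ∀ x ∈ Set.Ioo lo hi, w x = (N x / I x) ^ p := by
    intro x hx
    obtain ⟨hwx, hwe⟩ := hw x hx
    rw [Iform x] at hwe
    have : (w x ^ (1 - σ)) ^ (1 - σ)⁻¹ = w x := Real.rpow_rpow_inv hwx.le h1σ'
    rw [← this, hwe]
  clear_value N I
  intro m hm
  obtain ⟨hm1, hm2⟩ := hm
  have hm0 : 0 < m := lt_of_le_of_lt hlo hm1
  have hIm : 0 < I m := hIpos m hm0
  have hNm : 0 < N m := by simpa [hN_def] using hpos m ⟨hm1, hm2⟩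
  have hFm : 0 < N m / I m := div_pos hNm hIm
  have hwpos : 0 < w m := (hw m ⟨hm1, hm2⟩).1
  have hwep : 0 < w m * Real.exp (-α * m) := mul_pos hwpos (Real.exp_pos _)
  set E : ℝ := Real.exp (k * m) with hE_def
  set D : ℝ := (c ^ (1 - σ) - (N m / I m) * E) / I m with hD_def
  clear_value E
  -- derivative of the explicit formula
  have hF' : HasDerivAt (fun x => N x / I x) D m := by
    have h1 := (hN' m).div (hIder m) hIm.ne'
    rw [← hE_def] at h1
    have h2 : (c ^ (1 - σ) * I m - N m * E) / I m ^ 2 = D := by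
      rw [hD_def]
      field_simp
    rwa [h2] at h1
  have hg' : HasDerivAt (fun x => (N x / I x) ^ p) (D * p * (N m / I m) ^ (p - 1)) m :=
    hF'.rpow_const (Or.inl hFm.ne')
  have hev : w =ᶠ[nhds m] fun x => (N x / I x) ^ p := by
    filter_upwards [Ioo_mem_nhds hm1 hm2] with x hx using heq x hx
  have hdiff : DifferentiableAt ℝ w m :=
    hev.differentiableAt_iff.mpr hg'.differentiableAt
  have hderw : deriv w m = D * (p * (N m / I m) ^ (p - 1)) := by
    rw [hev.deriv_eq, hg'.deriv, mul_assoc]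
  have hwm : w m = (N m / I m) ^ p := heq m ⟨hm1, hm2⟩
  have hwm1σ : w m ^ (1 - σ) = N m / I m := by
    rw [hwm, hp_def]
    exact Real.rpow_inv_rpow hFm.le h1σ'
  -- key: (w m * exp (-α m))^(1-σ) = (N m / I m) * E
  have hkey : (w m * Real.exp (-α * m)) ^ (1 - σ) = (N m / I m) * E := by
    rw [Real.mul_rpow hwpos.le (Real.exp_pos _).le, hwm1σ]
    congr 1
    rw [← Real.exp_mul, hE_def, hk_def]
    ring_nf
  have hq : 0 < p * (N m / I m) ^ (p - 1) := mul_pos hp (Real.rpow_pos_of_pos hFm _)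
  refine ⟨hdiff, ?_, ?_, ?_⟩
  · -- the derivative identity
    rw [hderw, Iform m, hkey, hwm]
    have e1 : ((N m / I m) ^ p) ^ (-σ) * (N m / I m) ^ (p - 1) = 1 := by
      rw [← Real.rpow_mul hFm.le, ← Real.rpow_add hFm]
      rw [show p * -σ + (p - 1) = 0 by rw [hp_def]; field_simp; ring]
      exact Real.rpow_zero _
    have e2 : (1 - σ) * p = 1 := mul_inv_cancel₀ h1σ'
    calc (1 - σ) * ((N m / I m) ^ p) ^ (-σ) * (D * (p * (N m / I m) ^ (p - 1)))
        = ((1 - σ) * p) * D * (((N m / I m) ^ p) ^ (-σ) * (N m / I m) ^ (p - 1)) := by ring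
      _ = D := by rw [e1, e2]; ring
      _ = (c ^ (1 - σ) - N m / I m * E) / I m := rfl
  · -- positive derivative iff region 1
    rw [hderw, mul_pos_iff_of_pos_right hq, hD_def,
      lt_div_iff₀ hIm, zero_mul, sub_pos, ← hkey,
      ← Real.rpow_lt_rpow_iff hwep.le hc.le h1σ]
  · -- negative derivative iff region 2
    rw [hderw]
    have h3 : D * (p * (N m / I m) ^ (p - 1)) < 0 ↔ D < 0 := by
      constructor
      · intro h; by_contra h'; push_neg at h'; nlinarith
      · intro h; exact mul_neg_of_neg_of_pos h hq
    rw [h3, hD_def, div_lt_iff₀ hIm, zero_mul, sub_neg, ← hkey,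
      ← Real.rpow_lt_rpow_iff hc.le hwep.le h1σ]
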